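/- In the Farey tree Σ, every vertex has degree exactly 3; that is, every Farey triangle is adjacent in Σ to exactly three other Farey triangles. -/

import Mathlib

/-- A Farey vertex is an element of `ℚ ∪ {∞}`; `none` represents `∞`. -/
abbrev FareyVertex := Option ℚ

/-- The numerator of the reduced form `a/b` (with `b ≥ 0`) of a Farey vertex; `∞ = 1/0`. -/
def fnum : FareyVertex → ℤ
  | none => 1
  | some r => r.num

/-- The denominator of the reduced form `a/b` (with `b ≥ 0`) of a Farey vertex; `∞ = 1/0`. -/
def fden : FareyVertex → ℤ
  | none => 0
  | some r => (r.den : ℤ)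

/-- Two Farey vertices with reduced forms `a/b` and `c/d` are Farey-neighbors if `|ad - bc| = 1`. -/
def FareyNeighbor (x y : FareyVertex) : Prop :=
  |fnum x * fden y - fden x * fnum y| = 1

/-- A Farey triangle: a set of three distinct pairwise Farey-neighbor Farey vertices. -/
@[ext]
structure FareyTriangle where
  verts : Finset FareyVertex
  card_eq : verts.card = 3
  neighbors : ∀ x ∈ verts, ∀ y ∈ verts, x ≠ y → FareyNeighbor x y

/-- The Farey tree `Σ`: vertices are the Farey triangles, two triangles being adjacent
if and only if their intersection has exactly two elements. -/
def fareyTree : SimpleGraph FareyTriangle where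
  Adj T T' := (T.verts ∩ T'.verts).card = 2
  symm := by
    constructor
    intro T T' h
    try dsimp only at h ⊢
    rwa [Finset.inter_comm]
  loopless := by
    constructor
    intro T h
    try dsimp only at h
    rw [Finset.inter_self, T.card_eq] at h
    omega

/-- The Farey vertex represented by the (not necessarily reduced) fraction `a/b`,
with the conventions `a/b = (-a)/(-b)` and `x/0 = ∞`. -/
def mkFarey (a b : ℤ) : FareyVertex :=
  if b = 0 then none else some ((a : ℚ) / (b : ℚ))

lemma neighbor_int_succ (i : ℤ) :
    FareyNeighbor (some (i : ℚ)) (some ((i + 1 : ℤ) : ℚ)) := by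
  have hn : (((i + 1 : ℤ) : ℚ)).num = i + 1 := Rat.num_intCast _
  have hd : (((i + 1 : ℤ) : ℚ)).den = 1 := Rat.den_intCast _
  simp only [FareyNeighbor, fnum, fden, hn, hd, Rat.num_intCast, Rat.den_intCast]
  simp

lemma neighbor_int_inf (i : ℤ) : FareyNeighbor (some (i : ℚ)) none := by
  simp [FareyNeighbor, fnum, fden]

lemma neighbor_symm {x y : FareyVertex} (h : FareyNeighbor x y) : FareyNeighbor y x := by
  unfold FareyNeighbor at h ⊢
  rw [← abs_neg]
  convert h using 2
  ring

/-- `△⁽ⁱ⁾`: the Farey triangle with vertices `i`, `i+1` and `∞`. -/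
def stdTriangle (i : ℤ) : FareyTriangle where
  verts := {some (i : ℚ), some ((i + 1 : ℤ) : ℚ), none}
  card_eq := by
    have h1 : (some (i : ℚ) : FareyVertex) ≠ some ((i + 1 : ℤ) : ℚ) := by
      simp only [ne_eq, Option.some.injEq]
      intro h
      have : (i : ℚ) = (i : ℚ) + 1 := by push_cast at h ⊢; linarith
      linarith
    simp [Finset.card_insert_of_notMem, h1]
  neighbors := by
    intro x hx y hy hxy
    have h1 := neighbor_int_succ i
    have h2 := neighbor_int_inf i
    have h3 := neighbor_int_inf (i + 1)
    simp only [Finset.mem_insert, Finset.mem_singleton] at hx hy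
    rcases hx with rfl | rfl | rfl <;> rcases hy with rfl | rfl | rfl <;>
      first
        | exact absurd rfl hxy
        | assumption
        | exact neighbor_symm h1
        | exact neighbor_symm h2
        | exact neighbor_symm h3

/-- `S p q` is the sum of the partial quotients in the expansion of `p/q`
as a regular continued fraction (for coprime `p ≥ 0`, `q ≥ 1`), with `S 0 1 = 0`. -/
def S (p q : ℕ) : ℕ :=
  if h : q = 0 then 0
  else p / q + S q (p % q)
termination_by q
decreasing_by exact Nat.mod_lt p (Nat.pos_of_ne_zero h)


/-! ### Auxiliary lemmas -/

lemma fareyNeighbor_ne {x y : FareyVertex} (h : FareyNeighbor x y) : x ≠ y := by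
  rintro rfl
  rw [FareyNeighbor, show fnum x * fden x - fden x * fnum x = 0 by ring] at h
  simp at h

lemma fden_nonneg (v : FareyVertex) : 0 ≤ fden v := by
  cases v with
  | none => simp [fden]
  | some r => exact Int.natCast_nonneg _

lemma farey_coprime (v : FareyVertex) : Int.gcd (fnum v) (fden v) = 1 := by
  cases v with
  | none => decide
  | some r => exact r.reduced

lemma eq_none_of_fden_eq_zero {v : FareyVertex} (h : fden v = 0) : v = none := by
  cases v with
  | none => rfl
  | some r =>
    exfalso
    simp only [fden, Int.natCast_eq_zero] at h
    exact r.den_nz h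

lemma farey_ext {v w : FareyVertex} (h1 : fnum v = fnum w) (h2 : fden v = fden w) : v = w := by
  cases v with
  | none =>
    have hw : fden w = 0 := by rw [← h2]; rfl
    exact (eq_none_of_fden_eq_zero hw).symm
  | some r =>
    cases w with
    | none =>
      have hv : fden (some r) = 0 := by rw [h2]; rfl
      exact absurd (eq_none_of_fden_eq_zero hv) (by simp)
    | some s =>
      simp only [fnum, fden, Nat.cast_inj] at h1 h2
      exact congrArg some (Rat.ext h1 h2)

lemma mkFarey_pair (p q : ℤ) (h : Int.gcd p q = 1) :
    (fnum (mkFarey p q) = p ∧ fden (mkFarey p q) = q) ∨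
    (fnum (mkFarey p q) = -p ∧ fden (mkFarey p q) = -q) := by
  rcases lt_trichotomy q 0 with hq | rfl | hq
  · right
    have hq' : q ≠ 0 := hq.ne
    have hmk : mkFarey p q = some (((-p : ℤ) : ℚ) / ((-q : ℤ) : ℚ)) := by
      rw [mkFarey, if_neg hq']
      congr 1
      push_cast
      rw [neg_div_neg_eq]
    have h0 : (0:ℤ) < -q := by omega
    have hc : (-p).natAbs.Coprime (-q).natAbs := by
      simpa [Int.gcd, Int.natAbs_neg] using h
    rw [hmk]
    constructor
    · show (((-p : ℤ) : ℚ) / ((-q : ℤ) : ℚ)).num = -p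
      exact Rat.num_div_eq_of_coprime h0 hc
    · show ((((-p : ℤ) : ℚ) / ((-q : ℤ) : ℚ)).den : ℤ) = -q
      exact Rat.den_div_eq_of_coprime h0 hc
  · have hp : p = 1 ∨ p = -1 := by
      simp [Int.gcd] at h
      omega
    rcases hp with rfl | rfl
    · left; exact ⟨by simp [mkFarey, fnum], by simp [mkFarey, fden]⟩
    · right; exact ⟨by simp [mkFarey, fnum], by simp [mkFarey, fden]⟩
  · left
    have hq' : q ≠ 0 := hq.ne'
    have hmk : mkFarey p q = some ((p : ℚ) / (q : ℚ)) := by rw [mkFarey, if_neg hq']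
    have hc : p.natAbs.Coprime q.natAbs := by simpa [Int.gcd] using h
    rw [hmk]
    constructor
    · show (((p : ℤ) : ℚ) / ((q : ℤ) : ℚ)).num = p
      exact Rat.num_div_eq_of_coprime hq hc
    · show ((((p : ℤ) : ℚ) / ((q : ℤ) : ℚ)).den : ℤ) = q
      exact Rat.den_div_eq_of_coprime hq hc

lemma mkFarey_self (v : FareyVertex) : mkFarey (fnum v) (fden v) = v := by
  rcases mkFarey_pair (fnum v) (fden v) (farey_coprime v) with ⟨h1, h2⟩ | ⟨h1, h2⟩
  · exact farey_ext h1 h2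
  · have h3 : fden v = 0 := by
      have := fden_nonneg v
      have := fden_nonneg (mkFarey (fnum v) (fden v))
      omega
    have h4 : fden (mkFarey (fnum v) (fden v)) = 0 := by omega
    rw [eq_none_of_fden_eq_zero h4, eq_none_of_fden_eq_zero h3]

lemma mkFarey_neg (p q : ℤ) : mkFarey (-p) (-q) = mkFarey p q := by
  rcases eq_or_ne q 0 with rfl | hq
  · simp [mkFarey]
  · rw [mkFarey, mkFarey, if_neg (by omega : -q ≠ 0), if_neg hq]
    congr 1
    push_cast
    rw [neg_div_neg_eq]

lemma fareyNeighbor_mkFarey (x : FareyVertex) (p q : ℤ) (h : Int.gcd p q = 1) :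
    FareyNeighbor x (mkFarey p q) ↔ |fnum x * q - fden x * p| = 1 := by
  rcases mkFarey_pair p q h with ⟨h1, h2⟩ | ⟨h1, h2⟩
  · rw [FareyNeighbor, h1, h2]
  · rw [FareyNeighbor, h1, h2,
      show fnum x * -q - fden x * -p = -(fnum x * q - fden x * p) by ring, abs_neg]

lemma coprime_add {a b c d : ℤ} (h : |a * d - b * c| = 1) : Int.gcd (a + c) (b + d) = 1 := by
  rw [← Int.isCoprime_iff_gcd_eq_one]
  rcases (abs_eq (by norm_num : (0:ℤ) ≤ 1)).mp h with h1 | h1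
  · exact ⟨d, -c, by linear_combination h1⟩
  · exact ⟨-d, c, by linear_combination -h1⟩

lemma coprime_sub {a b c d : ℤ} (h : |a * d - b * c| = 1) : Int.gcd (a - c) (b - d) = 1 := by
  rw [← Int.isCoprime_iff_gcd_eq_one]
  rcases (abs_eq (by norm_num : (0:ℤ) ≤ 1)).mp h with h1 | h1
  · exact ⟨d, -c, by linear_combination h1⟩
  · exact ⟨-d, c, by linear_combination -h1⟩

lemma solve_lin {a b c d e f : ℤ} (hE : |a * d - b * c| = 1) (hN : |a * f - b * e| = 1)
    (hM : |c * f - d * e| = 1) :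
    (e = a + c ∧ f = b + d) ∨ (e = -(a + c) ∧ f = -(b + d)) ∨
    (e = a - c ∧ f = b - d) ∨ (e = -(a - c) ∧ f = -(b - d)) := by
  have h01 : (0:ℤ) ≤ 1 := by norm_num
  rcases (abs_eq h01).mp hE with hE | hE <;>
  rcases (abs_eq h01).mp hN with hN | hN <;>
  rcases (abs_eq h01).mp hM with hM | hM
  · exact Or.inr (Or.inr (Or.inr ⟨by linear_combination -e*hE + c*hN - a*hM,
      by linear_combination -f*hE + d*hN - b*hM⟩))
  · exact Or.inl ⟨by linear_combination -e*hE + c*hN - a*hM,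
      by linear_combination -f*hE + d*hN - b*hM⟩
  · exact Or.inr (Or.inl ⟨by linear_combination -e*hE + c*hN - a*hM,
      by linear_combination -f*hE + d*hN - b*hM⟩)
  · exact Or.inr (Or.inr (Or.inl ⟨by linear_combination -e*hE + c*hN - a*hM,
      by linear_combination -f*hE + d*hN - b*hM⟩))
  · exact Or.inr (Or.inr (Or.inl ⟨by linear_combination e*hE - c*hN + a*hM,
      by linear_combination f*hE - d*hN + b*hM⟩))
  · exact Or.inr (Or.inl ⟨by linear_combination e*hE - c*hN + a*hM,
      by linear_combination f*hE - d*hN + b*hM⟩)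
  · exact Or.inl ⟨by linear_combination e*hE - c*hN + a*hM,
      by linear_combination f*hE - d*hN + b*hM⟩
  · exact Or.inr (Or.inr (Or.inr ⟨by linear_combination e*hE - c*hN + a*hM,
      by linear_combination f*hE - d*hN + b*hM⟩))

lemma common_iff (x y v : FareyVertex) (hxy : FareyNeighbor x y) :
    (FareyNeighbor x v ∧ FareyNeighbor y v) ↔
      v = mkFarey (fnum x + fnum y) (fden x + fden y) ∨
      v = mkFarey (fnum x - fnum y) (fden x - fden y) := by
  have hg1 : Int.gcd (fnum x + fnum y) (fden x + fden y) = 1 := coprime_add hxy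
  have hg2 : Int.gcd (fnum x - fnum y) (fden x - fden y) = 1 := coprime_sub hxy
  constructor
  · rintro ⟨h1, h2⟩
    rcases solve_lin hxy h1 h2 with ⟨he, hf⟩ | ⟨he, hf⟩ | ⟨he, hf⟩ | ⟨he, hf⟩
    · left; rw [← mkFarey_self v, he, hf]
    · left; rw [← mkFarey_self v, he, hf, mkFarey_neg]
    · right; rw [← mkFarey_self v, he, hf]
    · right; rw [← mkFarey_self v, he, hf, mkFarey_neg]
  · rintro (rfl | rfl)
    · constructor
      · rw [fareyNeighbor_mkFarey x _ _ hg1,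
          show fnum x * (fden x + fden y) - fden x * (fnum x + fnum y)
            = fnum x * fden y - fden x * fnum y by ring]
        exact hxy
      · rw [fareyNeighbor_mkFarey y _ _ hg1,
          show fnum y * (fden x + fden y) - fden y * (fnum x + fnum y)
            = -(fnum x * fden y - fden x * fnum y) by ring, abs_neg]
        exact hxy
    · constructor
      · rw [fareyNeighbor_mkFarey x _ _ hg2,
          show fnum x * (fden x - fden y) - fden x * (fnum x - fnum y)
            = -(fnum x * fden y - fden x * fnum y) by ring, abs_neg]
        exact hxy
      · rw [fareyNeighbor_mkFarey y _ _ hg2,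
          show fnum y * (fden x - fden y) - fden y * (fnum x - fnum y)
            = -(fnum x * fden y - fden x * fnum y) by ring, abs_neg]
        exact hxy

lemma mkFarey_add_ne_sub {x y : FareyVertex} (hxy : FareyNeighbor x y) :
    mkFarey (fnum x + fnum y) (fden x + fden y) ≠
      mkFarey (fnum x - fnum y) (fden x - fden y) := by
  intro h
  have hga : Int.gcd (fnum x) (fden x) = 1 := farey_coprime x
  have hgc : Int.gcd (fnum y) (fden y) = 1 := farey_coprime y
  have p1 := mkFarey_pair (fnum x + fnum y) (fden x + fden y) (coprime_add hxy)
  have p2 := mkFarey_pair (fnum x - fnum y) (fden x - fden y) (coprime_sub hxy)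
  rw [h] at p1
  rcases p1 with ⟨h1, h2⟩ | ⟨h1, h2⟩ <;> rcases p2 with ⟨h3, h4⟩ | ⟨h3, h4⟩
  · have hc : fnum y = 0 := by omega
    have hd : fden y = 0 := by omega
    rw [hc, hd] at hgc; exact absurd hgc (by decide)
  · have hc : fnum x = 0 := by omega
    have hd : fden x = 0 := by omega
    rw [hc, hd] at hga; exact absurd hga (by decide)
  · have hc : fnum x = 0 := by omega
    have hd : fden x = 0 := by omega
    rw [hc, hd] at hga; exact absurd hga (by decide)
  · have hc : fnum y = 0 := by omega
    have hd : fden y = 0 := by omega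
    rw [hc, hd] at hgc; exact absurd hgc (by decide)

lemma exists_unique_flip (x y z : FareyVertex) (hxy : FareyNeighbor x y)
    (hxz : FareyNeighbor x z) (hyz : FareyNeighbor y z) :
    ∃! w : FareyVertex, (FareyNeighbor x w ∧ FareyNeighbor y w) ∧ w ≠ z := by
  have hAB := mkFarey_add_ne_sub hxy
  rcases (common_iff x y z hxy).mp ⟨hxz, hyz⟩ with hz | hz
  · refine ⟨mkFarey (fnum x - fnum y) (fden x - fden y),
      ⟨(common_iff x y _ hxy).mpr (Or.inr rfl), by rw [hz]; exact hAB.symm⟩, ?_⟩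
    rintro w ⟨hw, hwz⟩
    rcases (common_iff x y w hxy).mp hw with h | h
    · exact absurd (h.trans hz.symm) hwz
    · exact h
  · refine ⟨mkFarey (fnum x + fnum y) (fden x + fden y),
      ⟨(common_iff x y _ hxy).mpr (Or.inl rfl), by rw [hz]; exact hAB⟩, ?_⟩
    rintro w ⟨hw, hwz⟩
    rcases (common_iff x y w hxy).mp hw with h | h
    · exact h
    · exact absurd (h.trans hz.symm) hwz

/-- The triangle with vertices `x`, `y`, `w`, given pairwise neighbor proofs. -/
def triOf (x y w : FareyVertex) (hxy : FareyNeighbor x y) (hxw : FareyNeighbor x w)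
    (hyw : FareyNeighbor y w) : FareyTriangle where
  verts := {x, y, w}
  card_eq := by
    rw [Finset.card_insert_of_notMem (by
        simp only [Finset.mem_insert, Finset.mem_singleton]
        push_neg
        exact ⟨fareyNeighbor_ne hxy, fareyNeighbor_ne hxw⟩),
      Finset.card_insert_of_notMem (by
        simp only [Finset.mem_singleton]
        exact fareyNeighbor_ne hyw),
      Finset.card_singleton]
  neighbors := by
    intro u hu v hv huv
    simp only [Finset.mem_insert, Finset.mem_singleton] at hu hv
    rcases hu with rfl | rfl | rfl <;> rcases hv with rfl | rfl | rfl <;>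
      first
        | exact absurd rfl huv
        | assumption
        | exact neighbor_symm hxy
        | exact neighbor_symm hxw
        | exact neighbor_symm hyw

lemma inter_card_two {x y z w : FareyVertex} (hxy : x ≠ y) (hxz : x ≠ z) (hyz : y ≠ z)
    (hwx : w ≠ x) (hwy : w ≠ y) (hwz : w ≠ z) :
    (({x, y, z} : Finset FareyVertex) ∩ {x, y, w}).card = 2 := by
  have key : (({x, y, z} : Finset FareyVertex) ∩ {x, y, w}) = {x, y} := by
    ext u
    simp only [Finset.mem_inter, Finset.mem_insert, Finset.mem_singleton]
    constructor
    · rintro ⟨ha, hb⟩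
      rcases ha with rfl | rfl | rfl
      · exact Or.inl rfl
      · exact Or.inr rfl
      · exfalso
        rcases hb with h | h | h
        exacts [hxz h.symm, hyz h.symm, hwz h.symm]
    · rintro (rfl | rfl)
      · exact ⟨Or.inl rfl, Or.inl rfl⟩
      · exact ⟨Or.inr (Or.inl rfl), Or.inr (Or.inl rfl)⟩
  rw [key, Finset.card_insert_of_notMem (by simpa using hxy), Finset.card_singleton]

lemma fareyTree_adj_iff (T T' : FareyTriangle) :
    fareyTree.Adj T T' ↔ (T.verts ∩ T'.verts).card = 2 := Iff.rfl

lemma triOf_verts (x y w : FareyVertex) (hxy : FareyNeighbor x y) (hxw : FareyNeighbor x w)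
    (hyw : FareyNeighbor y w) : (triOf x y w hxy hxw hyw).verts = {x, y, w} := rfl

set_option maxHeartbeats 2000000 in
theorem fareyTree_degree_three (T : FareyTriangle) :
    {T' : FareyTriangle | fareyTree.Adj T T'}.ncard = 3 := by
  obtain ⟨x, y, z, hxy0, hxz0, hyz0, hT⟩ := Finset.card_eq_three.mp T.card_eq
  have hmx : x ∈ T.verts := by rw [hT]; simp
  have hmy : y ∈ T.verts := by rw [hT]; simp
  have hmz : z ∈ T.verts := by rw [hT]; simp
  have hxy : FareyNeighbor x y := T.neighbors x hmx y hmy hxy0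
  have hxz : FareyNeighbor x z := T.neighbors x hmx z hmz hxz0
  have hyz : FareyNeighbor y z := T.neighbors y hmy z hmz hyz0
  obtain ⟨w1, ⟨⟨hxw1, hyw1⟩, hw1z⟩, hu1⟩ := exists_unique_flip x y z hxy hxz hyz
  obtain ⟨w2, ⟨⟨hyw2, hzw2⟩, hw2x⟩, hu2⟩ :=
    exists_unique_flip y z x hyz (neighbor_symm hxy) (neighbor_symm hxz)
  obtain ⟨w3, ⟨⟨hxw3, hzw3⟩, hw3y⟩, hu3⟩ :=
    exists_unique_flip x z y hxz hxy (neighbor_symm hyz)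
  rw [Set.ncard_eq_three]
  refine ⟨triOf x y w1 hxy hxw1 hyw1, triOf y z w2 hyz hyw2 hzw2,
    triOf x z w3 hxz hxw3 hzw3, ?_, ?_, ?_, ?_⟩
  · intro h
    have h' : ({x, y, w1} : Finset FareyVertex) = {y, z, w2} :=
      congrArg FareyTriangle.verts h
    have hx : x ∈ ({y, z, w2} : Finset FareyVertex) := h' ▸ (by simp)
    simp only [Finset.mem_insert, Finset.mem_singleton] at hx
    rcases hx with h | h | h
    exacts [hxy0 h, hxz0 h, hw2x h.symm]
  · intro h
    have h' : ({x, y, w1} : Finset FareyVertex) = {x, z, w3} :=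
      congrArg FareyTriangle.verts h
    have hy : y ∈ ({x, z, w3} : Finset FareyVertex) := h' ▸ (by simp)
    simp only [Finset.mem_insert, Finset.mem_singleton] at hy
    rcases hy with h | h | h
    exacts [hxy0 h.symm, hyz0 h, hw3y h.symm]
  · intro h
    have h' : ({y, z, w2} : Finset FareyVertex) = {x, z, w3} :=
      congrArg FareyTriangle.verts h
    have hy : y ∈ ({x, z, w3} : Finset FareyVertex) := h' ▸ (by simp)
    simp only [Finset.mem_insert, Finset.mem_singleton] at hy
    rcases hy with h | h | h
    exacts [hxy0 h.symm, hyz0 h, hw3y h.symm]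
  · ext T'
    simp only [Set.mem_setOf_eq, Set.mem_insert_iff, Set.mem_singleton_iff]
    constructor
    · intro h
      rw [fareyTree_adj_iff] at h
      obtain ⟨p, q, hpq, hI⟩ := Finset.card_eq_two.mp h
      have hsub' : ({p, q} : Finset FareyVertex) ⊆ T'.verts :=
        hI ▸ Finset.inter_subset_right
      have hsubT : ({p, q} : Finset FareyVertex) ⊆ T.verts :=
        hI ▸ Finset.inter_subset_left
      have hcard : (T'.verts \ {p, q}).card = 1 := by
        rw [Finset.card_sdiff_of_subset hsub', T'.card_eq,
          Finset.card_insert_of_notMem (by simpa using hpq), Finset.card_singleton]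
      obtain ⟨w, hw⟩ := Finset.card_eq_one.mp hcard
      have hwsd : w ∈ T'.verts \ ({p, q} : Finset FareyVertex) :=
        hw ▸ Finset.mem_singleton_self w
      have hwmem : w ∈ T'.verts := (Finset.mem_sdiff.mp hwsd).1
      have hwpq : w ≠ p ∧ w ≠ q := by
        have := (Finset.mem_sdiff.mp hwsd).2
        simp only [Finset.mem_insert, Finset.mem_singleton] at this
        push_neg at this
        exact this
      have hT'v : T'.verts = {p, q, w} := by
        have h1 : ({p, q} : Finset FareyVertex) ∪ (T'.verts \ {p, q}) = T'.verts :=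
          Finset.union_sdiff_of_subset hsub'
        rw [hw] at h1
        rw [← h1]
        ext u
        simp only [Finset.mem_union, Finset.mem_insert, Finset.mem_singleton]
        tauto
      have hwT : w ∉ T.verts := by
        intro hmem
        have hin : w ∈ T.verts ∩ T'.verts := Finset.mem_inter.mpr ⟨hmem, hwmem⟩
        rw [hI] at hin
        simp only [Finset.mem_insert, Finset.mem_singleton] at hin
        rcases hin with h | h
        exacts [hwpq.1 h, hwpq.2 h]
      have hpmem' : p ∈ T'.verts := hsub' (by simp)
      have hqmem' : q ∈ T'.verts := hsub' (by simp)
      have hNpw : FareyNeighbor p w := T'.neighbors p hpmem' w hwmem (hwpq.1).symm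
      have hNqw : FareyNeighbor q w := T'.neighbors q hqmem' w hwmem (hwpq.2).symm
      have hp : p ∈ T.verts := hsubT (by simp)
      have hq : q ∈ T.verts := hsubT (by simp)
      rw [hT] at hp hq
      simp only [Finset.mem_insert, Finset.mem_singleton] at hp hq
      rcases hp with rfl | rfl | rfl <;> rcases hq with rfl | rfl | rfl
      · exact absurd rfl hpq
      · -- (p, q) = (x, y)
        have hwz : w ≠ z := fun h => hwT (by rw [h]; exact hmz)
        have hww : w = w1 := hu1 w ⟨⟨hNpw, hNqw⟩, hwz⟩
        subst hww
        exact Or.inl (FareyTriangle.ext (by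
          rw [hT'v]; ext u
          simp only [triOf, Finset.mem_insert, Finset.mem_singleton]
          try tauto))
      · -- (p, q) = (x, z)
        have hwy : w ≠ y := fun h => hwT (by rw [h]; exact hmy)
        have hww : w = w3 := hu3 w ⟨⟨hNpw, hNqw⟩, hwy⟩
        subst hww
        exact Or.inr (Or.inr (FareyTriangle.ext (by
          rw [hT'v]; ext u
          simp only [triOf, Finset.mem_insert, Finset.mem_singleton]
          try tauto)))
      · -- (p, q) = (y, x)
        have hwz : w ≠ z := fun h => hwT (by rw [h]; exact hmz)
        have hww : w = w1 := hu1 w ⟨⟨hNqw, hNpw⟩, hwz⟩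
        subst hww
        exact Or.inl (FareyTriangle.ext (by
          rw [hT'v]; ext u
          simp only [triOf, Finset.mem_insert, Finset.mem_singleton]
          try tauto))
      · exact absurd rfl hpq
      · -- (p, q) = (y, z)
        have hwx : w ≠ x := fun h => hwT (by rw [h]; exact hmx)
        have hww : w = w2 := hu2 w ⟨⟨hNpw, hNqw⟩, hwx⟩
        subst hww
        exact Or.inr (Or.inl (FareyTriangle.ext (by
          rw [hT'v]; ext u
          simp only [triOf, Finset.mem_insert, Finset.mem_singleton]
          try tauto)))
      · -- (p, q) = (z, x)
        have hwy : w ≠ y := fun h => hwT (by rw [h]; exact hmy)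
        have hww : w = w3 := hu3 w ⟨⟨hNqw, hNpw⟩, hwy⟩
        subst hww
        exact Or.inr (Or.inr (FareyTriangle.ext (by
          rw [hT'v]; ext u
          simp only [triOf, Finset.mem_insert, Finset.mem_singleton]
          try tauto)))
      · -- (p, q) = (z, y)
        have hwx : w ≠ x := fun h => hwT (by rw [h]; exact hmx)
        have hww : w = w2 := hu2 w ⟨⟨hNqw, hNpw⟩, hwx⟩
        subst hww
        exact Or.inr (Or.inl (FareyTriangle.ext (by
          rw [hT'v]; ext u
          simp only [triOf, Finset.mem_insert, Finset.mem_singleton]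
          try tauto)))
      · exact absurd rfl hpq
    · have hperm1 : ({x, y, z} : Finset FareyVertex) = {y, z, x} := by
        ext u
        simp only [Finset.mem_insert, Finset.mem_singleton]
        tauto
      have hperm2 : ({x, y, z} : Finset FareyVertex) = {x, z, y} := by
        ext u
        simp only [Finset.mem_insert, Finset.mem_singleton]
        tauto
      rintro (rfl | rfl | rfl)
      · rw [fareyTree_adj_iff, triOf_verts, hT]
        exact inter_card_two hxy0 hxz0 hyz0 (fareyNeighbor_ne hxw1).symm
          (fareyNeighbor_ne hyw1).symm hw1z
      · rw [fareyTree_adj_iff, triOf_verts, hT, hperm1]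
        exact inter_card_two hyz0 hxy0.symm hxz0.symm (fareyNeighbor_ne hyw2).symm
          (fareyNeighbor_ne hzw2).symm hw2x
      · rw [fareyTree_adj_iff, triOf_verts, hT, hperm2]
        exact inter_card_two hxz0 hxy0 hyz0.symm (fareyNeighbor_ne hxw3).symm
          (fareyNeighbor_ne hzw3).symm hw3y
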